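/- Let H be a Hilbert space, φ : H → ℝ Fréchet differentiable and λ-convex with λ ≥ 0, let τ > 0, and suppose ξ*, v ∈ H satisfy ξ* = v − (τ/2)(∇φ(ξ*) + ∇φ(v)). Then ‖∇φ(ξ*)‖ ≤ ‖∇φ(v)‖. -/

import Mathlib

open RealInnerProductSpace

private lemma grad_le_sub
    {H : Type*} [NormedAddCommGroup H] [InnerProductSpace ℝ H] [CompleteSpace H]
    (lam : ℝ) (hlam : 0 ≤ lam)
    (φ : H → ℝ) (g : H → H) (hg : ∀ x, HasGradientAt φ (g x) x)
    (hconv : ∀ x y : H, ∀ t ∈ Set.Icc (0:ℝ) 1,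
      φ ((1 - t) • x + t • y) ≤
        (1 - t) * φ x + t * φ y - (lam / 2) * t * (1 - t) * ‖x - y‖ ^ 2)
    (x y : H) : ⟪g x, y - x⟫ ≤ φ y - φ x := by
  -- the function t ↦ φ (x + t • (y - x)) has derivative ⟪g x, y - x⟫ at 0
  have hline : HasDerivAt (fun t : ℝ => x + t • (y - x)) (y - x) 0 := by
    simpa using ((hasDerivAt_id (0:ℝ)).smul_const (y - x)).const_add x
  have hfd : HasFDerivAt φ ((InnerProductSpace.toDual ℝ H) (g x)) (x + (0:ℝ) • (y - x)) := by
    simpa using (hg x).hasFDerivAt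
  have hd : HasDerivAt (fun t : ℝ => φ (x + t • (y - x))) ⟪g x, y - x⟫ 0 := by
    have := hfd.comp_hasDerivAt (0:ℝ) hline
    simp at this; exact this
  have hslope := hasDerivAt_iff_tendsto_slope.mp hd
  have hslope' : Filter.Tendsto (slope (fun t : ℝ => φ (x + t • (y - x))) 0)
      (nhdsWithin 0 (Set.Ioi 0)) (nhds ⟪g x, y - x⟫) :=
    hslope.mono_left (nhdsWithin_mono 0 (fun t ht => ne_of_gt ht))
  refine le_of_tendsto hslope' ?_
  filter_upwards [Ioo_mem_nhdsGT_of_mem (by norm_num : (0:ℝ) ∈ Set.Ico (0:ℝ) 1)] with t ht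
  obtain ⟨ht0, ht1⟩ := ht
  have key := hconv x y t ⟨le_of_lt ht0, le_of_lt ht1⟩
  have hxy : (1 - t) • x + t • y = x + t • (y - x) := by
    module
  rw [hxy] at key
  have hlam' : 0 ≤ (lam / 2) * t * (1 - t) * ‖x - y‖ ^ 2 :=
    mul_nonneg (mul_nonneg (mul_nonneg (by linarith) ht0.le) (by linarith)) (sq_nonneg _)
  have key2 : φ (x + t • (y - x)) ≤ φ x + t * (φ y - φ x) := by nlinarith
  simp only [slope, vsub_eq_sub, zero_smul, add_zero, sub_zero, smul_eq_mul]
  rw [inv_mul_le_iff₀ ht0]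
  nlinarith

theorem trapezoid_gradient_nonincreasing
    {H : Type*} [NormedAddCommGroup H] [InnerProductSpace ℝ H] [CompleteSpace H]
    (lam τ : ℝ) (hlam : 0 ≤ lam) (hτ : 0 < τ)
    (φ : H → ℝ) (g : H → H) (hg : ∀ x, HasGradientAt φ (g x) x)
    (hconv : ∀ x y : H, ∀ t ∈ Set.Icc (0:ℝ) 1,
      φ ((1 - t) • x + t • y) ≤
        (1 - t) * φ x + t * φ y - (lam / 2) * t * (1 - t) * ‖x - y‖ ^ 2)
    (v ξs : H)
    (himp : ξs = v - (τ / 2) • (g ξs + g v)) :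
    ‖g ξs‖ ≤ ‖g v‖ := by
  have h1 := grad_le_sub lam hlam φ g hg hconv ξs v
  have h2 := grad_le_sub lam hlam φ g hg hconv v ξs
  have hmono : (0:ℝ) ≤ ⟪g ξs - g v, ξs - v⟫ := by
    have : ⟪g ξs - g v, ξs - v⟫ = -(⟪g ξs, v - ξs⟫ + ⟪g v, ξs - v⟫) := by
      rw [inner_sub_left]
      have e1 : (v : H) - ξs = -(ξs - v) := by abel
      rw [e1, inner_neg_right]; ring
    rw [this]; linarith
  have hsub : ξs - v = -((τ / 2) • (g ξs + g v)) := by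
    conv_lhs => rw [himp]
    abel
  rw [hsub, inner_neg_right, inner_smul_right] at hmono
  have hinner : ⟪g ξs - g v, g ξs + g v⟫ = ‖g ξs‖ ^ 2 - ‖g v‖ ^ 2 := by
    rw [inner_add_right, inner_sub_left, inner_sub_left,
      real_inner_self_eq_norm_sq, real_inner_self_eq_norm_sq,
      real_inner_comm (g v) (g ξs)]
    ring
  rw [hinner] at hmono
  have hd : ‖g ξs‖ ^ 2 - ‖g v‖ ^ 2 ≤ 0 := by nlinarith [hmono, hτ]
  nlinarith [hd, norm_nonneg (g ξs), norm_nonneg (g v),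
    sq_nonneg (‖g ξs‖ - ‖g v‖), sq_nonneg (‖g ξs‖ + ‖g v‖)]
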